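/- Let α ∈ (0,1] and W, Q be pmfs on a finite set Y with D_α(W‖Q) < ∞, and let W^α_Q be the order-α tilted pmf. Then ∑_y W^α_Q(y)·ln²(W^α_Q(y)/W(y)) ≤ 4e^{-2} + ((1-α)/α)²·(4 + D_α(W‖Q)²). -/

import Mathlib

open Real MeasureTheory Filter

def IsPMF {Y : Type*} [Fintype Y] (W : Y → ℝ) : Prop :=
  (∀ y, 0 ≤ W y) ∧ ∑ y, W y = 1

noncomputable def renyiDiv {Y : Type*} [Fintype Y] (α : ℝ) (W Q : Y → ℝ) : ℝ :=
  if α = 1 then ∑ y, W y * Real.log (W y / Q y)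
  else (α - 1)⁻¹ * Real.log (∑ y, W y ^ α * Q y ^ (1 - α))

open Classical in
/-- Extended-real-valued order-`α` Rényi divergence, taking the value `⊤` when the
divergence is infinite. -/
noncomputable def renyiDivE {Y : Type*} [Fintype Y] (α : ℝ) (W Q : Y → ℝ) : ENNReal :=
  if α = 1 then
    (if ∀ y, Q y = 0 → W y = 0 then ENNReal.ofReal (renyiDiv 1 W Q) else ⊤)
  else
    (if 0 < ∑ y, W y ^ α * Q y ^ (1 - α) then ENNReal.ofReal (renyiDiv α W Q) else ⊤)

/-- The order-`α` tilted pmf `W^α_Q`. -/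
noncomputable def tilt {Y : Type*} [Fintype Y] (α : ℝ) (W Q : Y → ℝ) : Y → ℝ :=
  fun y => Real.exp ((1 - α) * renyiDiv α W Q) * W y ^ α * Q y ^ (1 - α)

/-- The order-`α` Rényi information `I_α(P;W)` (mutual information for `α = 1`). -/
noncomputable def renyiInfo {X Y : Type*} [Fintype X] [Fintype Y] (α : ℝ) (P : X → ℝ)
    (W : X → Y → ℝ) : ℝ :=
  if α = 1 then ∑ x, P x * ∑ y, W x y * Real.log (W x y / (∑ x', P x' * W x' y))
  else (α / (α - 1)) * Real.log (∑ y, (∑ x, P x * W x y ^ α) ^ α⁻¹)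

/-- The order-`α` Rényi capacity `C_α(W) = sup_P I_α(P;W)`. -/
noncomputable def renyiCap {X Y : Type*} [Fintype X] [Fintype Y] (α : ℝ) (W : X → Y → ℝ) : ℝ :=
  sSup {c | ∃ P : X → ℝ, IsPMF P ∧ c = renyiInfo α P W}

/-- The sphere packing exponent `E_sp(R,W)`. -/
noncomputable def spe {X Y : Type*} [Fintype X] [Fintype Y] (R : ℝ) (W : X → Y → ℝ) : ℝ :=
  sSup {e | ∃ α ∈ Set.Ioo (0:ℝ) 1, e = ((1 - α) / α) * (renyiCap α W - R)}

/-- The order-`α` Rényi mean `q_{α,P}`. -/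
noncomputable def renyiMean {X Y : Type*} [Fintype X] [Fintype Y] (α : ℝ) (P : X → ℝ)
    (W : X → Y → ℝ) : Y → ℝ :=
  fun y => (∑ x, P x * W x y ^ α) ^ α⁻¹ / ∑ y', (∑ x, P x * W x y' ^ α) ^ α⁻¹

private lemma aux_sq_le_exp {x : ℝ} (hx : 0 ≤ x) : x ^ 2 ≤ 4 * Real.exp (x - 2) := by
  have h1 : x / 2 ≤ Real.exp (x / 2 - 1) := by
    have := Real.add_one_le_exp (x / 2 - 1); linarith
  have h2 : (x / 2) * (x / 2) ≤ Real.exp (x / 2 - 1) * Real.exp (x / 2 - 1) :=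
    mul_le_mul h1 h1 (by linarith) (le_of_lt (Real.exp_pos _))
  rw [← Real.exp_add] at h2
  have h3 : x / 2 - 1 + (x / 2 - 1) = x - 2 := by ring
  rw [h3] at h2
  nlinarith

private lemma aux_expsq {z : ℝ} (hz : z ≤ 0) : Real.exp z * z ^ 2 ≤ 4 * Real.exp (-2) := by
  have h := aux_sq_le_exp (x := -z) (by linarith)
  have h2 : Real.exp z * (-z) ^ 2 ≤ Real.exp z * (4 * Real.exp (-z - 2)) :=
    mul_le_mul_of_nonneg_left h (le_of_lt (Real.exp_pos _))
  have h3 : Real.exp z * (4 * Real.exp (-z - 2)) = 4 * Real.exp (-2) := by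
    rw [mul_comm (Real.exp z), mul_assoc, ← Real.exp_add]
    ring_nf
  nlinarith [h2, h3]

private lemma aux_quad_le_exp {w : ℝ} (hw : -2 ≤ w) : 1 + w + w ^ 2 / 4 ≤ Real.exp w := by
  have h1 : 1 + w / 2 ≤ Real.exp (w / 2) := by
    have := Real.add_one_le_exp (w / 2); linarith
  have h0 : 0 ≤ 1 + w / 2 := by linarith
  have h2 : (1 + w / 2) * (1 + w / 2) ≤ Real.exp (w / 2) * Real.exp (w / 2) :=
    mul_le_mul h1 h1 h0 (le_of_lt (Real.exp_pos _))
  rw [← Real.exp_add] at h2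
  have h3 : w / 2 + w / 2 = w := by ring
  rw [h3] at h2
  nlinarith

private lemma aux_key2 {D v : ℝ} (hD : 2 ≤ D) (hv : 0 ≤ v) :
    v ^ 2 ≤ D ^ 2 - 2 * D + 2 * D * Real.exp (v - D) := by
  rcases le_or_gt v (D - 2) with h | h
  · nlinarith [Real.exp_pos (v - D)]
  · have hw : -2 ≤ v - D := by linarith
    have h2 := aux_quad_le_exp hw
    nlinarith [sq_nonneg (v - D), mul_le_mul_of_nonneg_left h2 (by linarith : (0:ℝ) ≤ 2 * D),
      mul_nonneg (by linarith : (0:ℝ) ≤ D - 2) (sq_nonneg (v - D))]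

/-- second moment bound for the log-likelihood ratio of the tilted pmf
with respect to `W`. -/
theorem tilt_variance_bound_W {Y : Type*} [Fintype Y] (α : ℝ) (hα : α ∈ Set.Ioc (0:ℝ) 1)
    (W Q : Y → ℝ) (hW : IsPMF W) (hQ : IsPMF Q) (hfin : renyiDivE α W Q ≠ ⊤) :
    ∑ y, tilt α W Q y * (Real.log (tilt α W Q y / W y)) ^ 2
      ≤ 4 * Real.exp (-2) + ((1 - α) / α) ^ 2 * (4 + (renyiDiv α W Q) ^ 2) := by
  obtain ⟨hα0, hα1⟩ := hα
  rcases eq_or_lt_of_le hα1 with h1 | h1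
  · -- α = 1 : tilt = W, each log term is 0
    subst h1
    have hz : ∀ y, tilt 1 W Q y * (Real.log (tilt 1 W Q y / W y)) ^ 2 = 0 := by
      intro y
      have ht : tilt 1 W Q y = W y := by
        simp [tilt, Real.rpow_one, Real.rpow_zero]
      rw [ht]
      rcases eq_or_lt_of_le (hW.1 y) with h | h
      · rw [← h]; ring
      · rw [div_self (ne_of_gt h), Real.log_one]; ring
    rw [Finset.sum_congr rfl (fun y _ => hz y)]
    simp
    positivity
  · -- α < 1
    have hα1' : α ≠ 1 := ne_of_lt h1
    have hα0' : α ≠ 0 := ne_of_gt hα0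
    set D := renyiDiv α W Q with hDdef
    set S := ∑ y, W y ^ α * Q y ^ (1 - α) with hSdef
    have hSpos : 0 < S := by
      by_contra hc
      rw [renyiDivE, if_neg hα1', if_neg hc] at hfin
      exact hfin rfl
    have hDS : D = (α - 1)⁻¹ * Real.log S := by
      rw [hDdef, renyiDiv, if_neg hα1']
    have hc : Real.exp ((1 - α) * D) = S⁻¹ := by
      rw [hDS, ← Real.exp_log (show (0:ℝ) < S⁻¹ from inv_pos.mpr hSpos), Real.log_inv]
      congr 1
      field_simp [sub_ne_zero.mpr hα1']
      ring
    have htnonneg : ∀ y, 0 ≤ tilt α W Q y := by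
      intro y
      have := hW.1 y; have := hQ.1 y
      unfold tilt
      positivity
    have hsum_t : ∑ y, tilt α W Q y = 1 := by
      unfold tilt
      rw [← hDdef]
      simp only [mul_assoc]
      rw [← Finset.mul_sum, hc, ← hSdef, inv_mul_cancel₀ (ne_of_gt hSpos)]
    -- choice of coefficients A, B depending on whether D ≥ 2
    obtain ⟨A, B, hA, hB, hAB, hpt⟩ :
        ∃ A B : ℝ, 0 ≤ A ∧ 0 ≤ B ∧ A + B ≤ 4 + D ^ 2 ∧
          ∀ y, tilt α W Q y * (Real.log (tilt α W Q y / W y)) ^ 2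
            ≤ 4 * Real.exp (-2) * W y + ((1 - α) / α) ^ 2 * (A * tilt α W Q y + B * Q y) := by
      have main : ∀ y, 0 < W y → 0 < Q y →
          ∀ A B : ℝ, 0 ≤ A → 0 ≤ B →
          ((2 ≤ D ∧ A = D ^ 2 - 2 * D ∧ B = 2 * D) ∨ (D < 2 ∧ A = 0 ∧ B = 4)) →
          tilt α W Q y * (Real.log (tilt α W Q y / W y)) ^ 2
            ≤ 4 * Real.exp (-2) * W y + ((1 - α) / α) ^ 2 * (A * tilt α W Q y + B * Q y) := by
        intro y hWy hQy A B hA hB hcase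
        set lw := Real.log (W y) with hlw
        set lq := Real.log (Q y) with hlq
        have htilt : tilt α W Q y = Real.exp ((1 - α) * D + lw * α + lq * (1 - α)) := by
          unfold tilt
          rw [← hDdef, Real.rpow_def_of_pos hWy, Real.rpow_def_of_pos hQy,
            ← Real.exp_add, ← Real.exp_add]
        have htpos : 0 < tilt α W Q y := htilt ▸ Real.exp_pos _
        set s := D + lq - lw with hs
        have hZ : Real.log (tilt α W Q y / W y) = (1 - α) * s := by
          rw [Real.log_div (ne_of_gt htpos) (ne_of_gt hWy), htilt, Real.log_exp, ← hlw, hs]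
          ring
        have hid : tilt α W Q y * Real.exp (α * s - D) = Q y := by
          rw [htilt, ← Real.exp_add,
            show (1 - α) * D + lw * α + lq * (1 - α) + (α * s - D) = lq by rw [hs]; ring,
            hlq, Real.exp_log hQy]
        rw [hZ]
        rcases le_or_gt s 0 with hsle | hsgt
        · -- Z ≤ 0 : bounded by 4 e⁻² W y
          have htw : tilt α W Q y = W y * Real.exp ((1 - α) * s) := by
            rw [htilt, hs, show W y = Real.exp lw from (Real.exp_log hWy).symm, ← Real.exp_add]
            congr 1
            ring
          have hZle : (1 - α) * s ≤ 0 :=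
            mul_nonpos_of_nonneg_of_nonpos (by linarith) hsle
          have := aux_expsq hZle
          have hle : tilt α W Q y * ((1 - α) * s) ^ 2 ≤ 4 * Real.exp (-2) * W y := by
            rw [htw]
            calc W y * Real.exp ((1 - α) * s) * ((1 - α) * s) ^ 2
                = W y * (Real.exp ((1 - α) * s) * ((1 - α) * s) ^ 2) := by ring
              _ ≤ W y * (4 * Real.exp (-2)) :=
                  mul_le_mul_of_nonneg_left this (le_of_lt hWy)
              _ = 4 * Real.exp (-2) * W y := by ring
          have hrest : 0 ≤ ((1 - α) / α) ^ 2 * (A * tilt α W Q y + B * Q y) := by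
            have := le_of_lt htpos; have := le_of_lt hQy
            positivity
          exact le_trans hle (by linarith)
        · -- Z > 0 : use V = α s ≥ 0 and tilt * exp(V - D) = Q
          set V := α * s with hV
          have hVpos : 0 < V := mul_pos hα0 hsgt
          have hZV : ((1 - α) * s) ^ 2 = ((1 - α) / α) ^ 2 * V ^ 2 := by
            rw [hV]
            field_simp
          rw [hZV]
          have hWterm : 0 ≤ 4 * Real.exp (-2) * W y := by positivity
          have key : tilt α W Q y * V ^ 2 ≤ A * tilt α W Q y + B * Q y := by
            rcases hcase with ⟨hD2, hAe, hBe⟩ | ⟨hD2, hAe, hBe⟩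
            · -- D ≥ 2
              have hk := aux_key2 hD2 (le_of_lt hVpos)
              have h2 : tilt α W Q y * V ^ 2
                  ≤ tilt α W Q y * (D ^ 2 - 2 * D + 2 * D * Real.exp (V - D)) :=
                mul_le_mul_of_nonneg_left hk (le_of_lt htpos)
              have h3 : tilt α W Q y * Real.exp (V - D) = Q y := hid
              calc tilt α W Q y * V ^ 2
                  ≤ tilt α W Q y * (D ^ 2 - 2 * D + 2 * D * Real.exp (V - D)) := h2
                _ = (D ^ 2 - 2 * D) * tilt α W Q y
                      + 2 * D * (tilt α W Q y * Real.exp (V - D)) := by ring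
                _ = A * tilt α W Q y + B * Q y := by rw [h3, hAe, hBe]
            · -- D < 2
              have hk := aux_sq_le_exp (le_of_lt hVpos)
              have h2 : tilt α W Q y * V ^ 2 ≤ tilt α W Q y * (4 * Real.exp (V - 2)) :=
                mul_le_mul_of_nonneg_left hk (le_of_lt htpos)
              have h3 : tilt α W Q y * Real.exp (V - 2)
                  = Q y * Real.exp (D - 2) := by
                rw [show V - 2 = (V - D) + (D - 2) by ring, Real.exp_add]
                rw [← mul_assoc, hid]
              have h4 : Q y * Real.exp (D - 2) ≤ Q y := by
                have : Real.exp (D - 2) ≤ 1 := Real.exp_le_one_iff.mpr (by linarith)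
                nlinarith [hQy]
              calc tilt α W Q y * V ^ 2
                  ≤ tilt α W Q y * (4 * Real.exp (V - 2)) := h2
                _ = 4 * (tilt α W Q y * Real.exp (V - 2)) := by ring
                _ = 4 * (Q y * Real.exp (D - 2)) := by rw [h3]
                _ ≤ 4 * Q y := by linarith
                _ = A * tilt α W Q y + B * Q y := by rw [hAe, hBe]; ring
          calc tilt α W Q y * (((1 - α) / α) ^ 2 * V ^ 2)
              = ((1 - α) / α) ^ 2 * (tilt α W Q y * V ^ 2) := by ring
            _ ≤ ((1 - α) / α) ^ 2 * (A * tilt α W Q y + B * Q y) := by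
                apply mul_le_mul_of_nonneg_left key (by positivity)
            _ ≤ 4 * Real.exp (-2) * W y + ((1 - α) / α) ^ 2 * (A * tilt α W Q y + B * Q y) := by
                linarith
      -- degenerate per-point bound when W y = 0 or Q y = 0
      have degen : ∀ y, tilt α W Q y = 0 →
          ∀ A B : ℝ, 0 ≤ A → 0 ≤ B →
          tilt α W Q y * (Real.log (tilt α W Q y / W y)) ^ 2
            ≤ 4 * Real.exp (-2) * W y + ((1 - α) / α) ^ 2 * (A * tilt α W Q y + B * Q y) := by
        intro y ht A B hA hB
        rw [ht]
        have := hW.1 y; have := hQ.1 y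
        have : (0:ℝ) * (Real.log (0 / W y)) ^ 2 = 0 := by ring
        rw [this]
        positivity
      have hcases : ∀ A B : ℝ, 0 ≤ A → 0 ≤ B →
          ((2 ≤ D ∧ A = D ^ 2 - 2 * D ∧ B = 2 * D) ∨ (D < 2 ∧ A = 0 ∧ B = 4)) →
          ∀ y, tilt α W Q y * (Real.log (tilt α W Q y / W y)) ^ 2
            ≤ 4 * Real.exp (-2) * W y + ((1 - α) / α) ^ 2 * (A * tilt α W Q y + B * Q y) := by
        intro A B hA hB hcase y
        rcases eq_or_lt_of_le (hW.1 y) with hWy | hWy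
        · apply degen y _ A B hA hB
          unfold tilt
          rw [← hWy, Real.zero_rpow hα0']
          ring
        rcases eq_or_lt_of_le (hQ.1 y) with hQy | hQy
        · apply degen y _ A B hA hB
          unfold tilt
          rw [← hQy, Real.zero_rpow (by intro h; apply hα1'; linarith : (1:ℝ) - α ≠ 0)]
          ring
        exact main y hWy hQy A B hA hB hcase
      rcases le_or_gt 2 D with hD2 | hD2
      · exact ⟨D ^ 2 - 2 * D, 2 * D, by nlinarith, by linarith, by nlinarith,
          hcases _ _ (by nlinarith) (by linarith) (Or.inl ⟨hD2, rfl, rfl⟩)⟩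
      · exact ⟨0, 4, le_refl 0, by norm_num, by nlinarith,
          hcases 0 4 (le_refl 0) (by norm_num) (Or.inr ⟨hD2, rfl, rfl⟩)⟩
    -- sum up
    calc ∑ y, tilt α W Q y * (Real.log (tilt α W Q y / W y)) ^ 2
        ≤ ∑ y, (4 * Real.exp (-2) * W y + ((1 - α) / α) ^ 2 * (A * tilt α W Q y + B * Q y)) :=
          Finset.sum_le_sum (fun y _ => hpt y)
      _ = 4 * Real.exp (-2) * (∑ y, W y)
            + ((1 - α) / α) ^ 2 * (A * (∑ y, tilt α W Q y) + B * (∑ y, Q y)) := by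
          rw [Finset.sum_add_distrib, ← Finset.mul_sum, ← Finset.mul_sum]
          congr 1
          rw [Finset.sum_add_distrib, ← Finset.mul_sum, ← Finset.mul_sum]
      _ = 4 * Real.exp (-2) + ((1 - α) / α) ^ 2 * (A + B) := by
          rw [hW.2, hQ.2, hsum_t]; ring
      _ ≤ 4 * Real.exp (-2) + ((1 - α) / α) ^ 2 * (4 + D ^ 2) := by
          have : (0:ℝ) ≤ ((1 - α) / α) ^ 2 := sq_nonneg _
          nlinarith
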